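/- Two-vertex join factorization: if G is the two-vertex join of graphs G_1 and G_2 at vertices v_1 and v_2 (identify an edge e_1 of G_1 with an edge e_2 of G_2 and cut it), then Ψ_G = Φ^{{v_1},{v_2}}_{G_1\e_1} · Ψ_{G_2\e_2} + Ψ_{G_1\e_1} · Φ^{{v_1},{v_2}}_{G_2\e_2}. -/

import Mathlib

/-- A finite multigraph with oriented edges: each edge has a source and a target vertex.
Self-loops (src = tgt) and parallel edges are allowed. -/
structure Multigraph (E V : Type*) where
  src : E → V
  tgt : E → V

namespace Multigraph

variable {E V : Type*}

/-- Two vertices are adjacent via an edge of the subset `F`. -/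
def Adj (G : Multigraph E V) (F : Finset E) (a b : V) : Prop :=
  ∃ e ∈ F, (G.src e = a ∧ G.tgt e = b) ∨ (G.src e = b ∧ G.tgt e = a)

/-- Reachability (connectivity) using only edges in `F`. -/
def Reach (G : Multigraph E V) (F : Finset E) : V → V → Prop :=
  Relation.ReflTransGen (G.Adj F)

/-- `T` is (the edge set of) a spanning tree of `G`: it connects all vertices and has
`|V| - 1` edges. -/
def IsSpanningTree (G : Multigraph E V) [Fintype V] (T : Finset E) : Prop :=
  (∀ v w : V, G.Reach T v w) ∧ T.card + 1 = Fintype.card V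

/-- `G` is connected. -/
def Connected (G : Multigraph E V) [Fintype E] [Fintype V] : Prop :=
  ∀ v w : V, G.Reach Finset.univ v w

/-- The signed incidence matrix entry of edge `e` at vertex `v`:
`+1` if `e` begins at `v`, `-1` if `e` ends at `v`, `0` otherwise (in particular `0`
for self-loops). -/
def inc (G : Multigraph E V) (R : Type*) [Ring R] [DecidableEq V] (e : E) (v : V) : R :=
  (if G.src e = v then 1 else 0) - (if G.tgt e = v then 1 else 0)

open Classical in
/-- The Kirchhoff (graph) polynomial `Ψ_G = Σ_T Π_{e ∉ T} α_e`, sum over spanning trees. -/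
noncomputable def kirchhoff (G : Multigraph E V) [Fintype E] [DecidableEq E] [Fintype V] :
    MvPolynomial E ℚ :=
  ∑ T : Finset E, if G.IsSpanningTree T then ∏ e ∈ Tᶜ, MvPolynomial.X e else 0

/-- `F` is a spanning forest of `G` whose trees realize the partition `parts` of a subset of
the vertices: it has `|V| - |parts|` edges (forcing acyclicity), vertices in the same part
are connected, vertices in different parts are disconnected, and every vertex lies in the
tree of some part. -/
def IsSpanningForest (G : Multigraph E V) [Fintype V] (parts : Finset (Finset V))
    (F : Finset E) : Prop :=
  F.card + parts.card = Fintype.card V ∧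
  (∀ p ∈ parts, ∀ v ∈ p, ∀ w ∈ p, G.Reach F v w) ∧
  (∀ p ∈ parts, ∀ q ∈ parts, p ≠ q → ∀ v ∈ p, ∀ w ∈ q, ¬ G.Reach F v w) ∧
  (∀ v : V, ∃ p ∈ parts, ∃ w ∈ p, G.Reach F v w)

open Classical in
/-- The spanning forest polynomial `Φ^P_G = Σ_F Π_{e ∉ F} α_e`. -/
noncomputable def forestPoly (G : Multigraph E V) [Fintype E] [DecidableEq E] [Fintype V]
    (parts : Finset (Finset V)) : MvPolynomial E ℚ :=
  ∑ F : Finset E, if G.IsSpanningForest parts F then ∏ e ∈ Fᶜ, MvPolynomial.X e else 0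

end Multigraph

/-- `parts` is a set partition (of the union of its parts): parts are nonempty and
pairwise disjoint. -/
def IsSetPartition {V : Type*} (parts : Finset (Finset V)) : Prop :=
  ∅ ∉ parts ∧ ∀ p ∈ parts, ∀ q ∈ parts, p ≠ q → Disjoint p q

/-- `parts` is a set partition of the finite vertex set `W`. -/
def IsPartitionOf {V : Type*} (W : Finset V) (parts : Finset (Finset V)) : Prop :=
  IsSetPartition parts ∧ (∀ p ∈ parts, p ⊆ W) ∧ ∀ v ∈ W, ∃ p ∈ parts, v ∈ p



namespace Multigraph

variable {E V : Type*}

theorem adj_symm (G : Multigraph E V) {F : Finset E} {a b : V} (h : G.Adj F a b) :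
    G.Adj F b a := by
  obtain ⟨e, he, h⟩ := h; exact ⟨e, he, h.symm⟩

theorem reach_symm (G : Multigraph E V) {F : Finset E} {a b : V} (h : G.Reach F a b) :
    G.Reach F b a :=
  @Std.Symm.symm _ _ (@Relation.ReflTransGen.stdSymm _ (G.Adj F) ⟨fun _ _ h => G.adj_symm h⟩) _ _ h

theorem reach_empty (G : Multigraph E V) {a b : V} (h : G.Reach ∅ a b) : a = b := by
  induction h with
  | refl => rfl
  | tail _ h _ => obtain ⟨e, he, -⟩ := h; exact absurd he (Finset.notMem_empty e)

theorem reach_insert_decomp (G : Multigraph E V) [DecidableEq E] {F : Finset E} {e : E}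
    {a b : V} (h : G.Reach (insert e F) a b) :
    G.Reach F a b ∨ (G.Reach F a (G.src e) ∧ G.Reach F (G.tgt e) b) ∨
      (G.Reach F a (G.tgt e) ∧ G.Reach F (G.src e) b) := by
  induction h with
  | refl => exact Or.inl .refl
  | @tail b c _ hadj ih =>
    obtain ⟨f, hf, hor⟩ := hadj
    rcases Finset.mem_insert.1 hf with rfl | hfF
    · rcases hor with ⟨hs, ht⟩ | ⟨hs, ht⟩
      · -- src f = b, tgt f = c
        subst hs; subst ht
        rcases ih with h1 | ⟨h1, h2⟩ | ⟨h1, h2⟩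
        · exact Or.inr (Or.inl ⟨h1, .refl⟩)
        · exact Or.inr (Or.inl ⟨h1, .refl⟩)
        · exact Or.inl h1
      · -- src f = c, tgt f = b
        subst hs; subst ht
        rcases ih with h1 | ⟨h1, h2⟩ | ⟨h1, h2⟩
        · exact Or.inr (Or.inr ⟨h1, .refl⟩)
        · exact Or.inl h1
        · exact Or.inr (Or.inr ⟨h1, .refl⟩)
    · have hbc : G.Adj F b c := ⟨f, hfF, hor⟩
      rcases ih with h1 | ⟨h1, h2⟩ | ⟨h1, h2⟩
      · exact Or.inl (h1.tail hbc)
      · exact Or.inr (Or.inl ⟨h1, h2.tail hbc⟩)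
      · exact Or.inr (Or.inr ⟨h1, h2.tail hbc⟩)

theorem card_le_of_reach_anchors (G : Multigraph E V) [Fintype V] [DecidableEq E]
    (F : Finset E) (A : Finset V) (h : ∀ v : V, ∃ a ∈ A, G.Reach F v a) :
    Fintype.card V ≤ F.card + A.card := by
  classical
  induction F using Finset.induction_on generalizing A with
  | empty =>
    have hA : ∀ v : V, v ∈ A := fun v => by
      obtain ⟨a, ha, hr⟩ := h v; exact (G.reach_empty hr) ▸ ha
    have := Finset.card_le_card (s := Finset.univ) (fun v _ => hA v)
    rw [Finset.card_univ] at this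
    simpa using this
  | @insert e F hne ih =>
    by_cases hF : ∀ v : V, ∃ a ∈ A, G.Reach F v a
    · have := ih A hF
      rw [Finset.card_insert_of_notMem hne]; omega
    · push_neg at hF
      obtain ⟨v0, hv0⟩ := hF
      obtain ⟨a0, ha0, hr0⟩ := h v0
      rcases G.reach_insert_decomp hr0 with h1 | ⟨h1, h2⟩ | ⟨h1, h2⟩
      · exact absurd h1 (hv0 a0 ha0)
      · -- tgt reaches A; anchors: insert (src e) A
        have hall : ∀ v : V, ∃ a ∈ insert (G.src e) A, G.Reach F v a := by
          intro v
          obtain ⟨a, ha, hr⟩ := h v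
          rcases G.reach_insert_decomp hr with g1 | ⟨g1, g2⟩ | ⟨g1, g2⟩
          · exact ⟨a, Finset.mem_insert_of_mem ha, g1⟩
          · exact ⟨G.src e, Finset.mem_insert_self _ _, g1⟩
          · exact ⟨a0, Finset.mem_insert_of_mem ha0, g1.trans h2⟩
        have := ih _ hall
        have h3 := Finset.card_insert_le (G.src e) A
        rw [Finset.card_insert_of_notMem hne]; omega
      · have hall : ∀ v : V, ∃ a ∈ insert (G.tgt e) A, G.Reach F v a := by
          intro v
          obtain ⟨a, ha, hr⟩ := h v
          rcases G.reach_insert_decomp hr with g1 | ⟨g1, g2⟩ | ⟨g1, g2⟩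
          · exact ⟨a, Finset.mem_insert_of_mem ha, g1⟩
          · exact ⟨a0, Finset.mem_insert_of_mem ha0, g1.trans h2⟩
          · exact ⟨G.tgt e, Finset.mem_insert_self _ _, g1⟩
        have := ih _ hall
        have h3 := Finset.card_insert_le (G.tgt e) A
        rw [Finset.card_insert_of_notMem hne]; omega

end Multigraph

namespace TVJ

open Multigraph

section P

variable {E1 E2 V1 V2 : Type*} (G1 : Multigraph E1 V1) (G2 : Multigraph E2 V2)
  (T1 : Finset E1) (T2 : Finset E2) (u1 u2 : V1) (w1 w2 : V2)

/-- same-side composite reachability -/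
def P11 (x y : V1) : Prop :=
  G1.Reach T1 x y ∨ (G1.Reach T1 x u1 ∧ G2.Reach T2 w1 w2 ∧ G1.Reach T1 u2 y)
    ∨ (G1.Reach T1 x u2 ∧ G2.Reach T2 w2 w1 ∧ G1.Reach T1 u1 y)

/-- cross-side composite reachability -/
def P12 (x : V1) (y : V2) : Prop :=
  (G1.Reach T1 x u1 ∧ G2.Reach T2 w1 y) ∨ (G1.Reach T1 x u2 ∧ G2.Reach T2 w2 y)

variable {G1 G2 T1 T2 u1 u2 w1 w2}

theorem P11.refl (x : V1) : P11 G1 G2 T1 T2 u1 u2 w1 w2 x x := Or.inl .refl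

theorem P11.tail {x y z : V1} (h : P11 G1 G2 T1 T2 u1 u2 w1 w2 x y)
    (h' : G1.Reach T1 y z) : P11 G1 G2 T1 T2 u1 u2 w1 w2 x z := by
  rcases h with h | ⟨h1, h2, h3⟩ | ⟨h1, h2, h3⟩
  · exact Or.inl (h.trans h')
  · exact Or.inr (Or.inl ⟨h1, h2, h3.trans h'⟩)
  · exact Or.inr (Or.inr ⟨h1, h2, h3.trans h'⟩)

theorem P12.tail {x : V1} {y z : V2} (h : P12 G1 G2 T1 T2 u1 u2 w1 w2 x y)
    (h' : G2.Reach T2 y z) : P12 G1 G2 T1 T2 u1 u2 w1 w2 x z := by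
  rcases h with ⟨h1, h2⟩ | ⟨h1, h2⟩
  · exact Or.inl ⟨h1, h2.trans h'⟩
  · exact Or.inr ⟨h1, h2.trans h'⟩

theorem P11.cross1 {x : V1} (h : P11 G1 G2 T1 T2 u1 u2 w1 w2 x u1) :
    P12 G1 G2 T1 T2 u1 u2 w1 w2 x w1 := by
  rcases h with h | ⟨h1, h2, h3⟩ | ⟨h1, h2, h3⟩
  · exact Or.inl ⟨h, .refl⟩
  · exact Or.inl ⟨h1, .refl⟩
  · exact Or.inr ⟨h1, h2⟩

theorem P11.cross2 {x : V1} (h : P11 G1 G2 T1 T2 u1 u2 w1 w2 x u2) :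
    P12 G1 G2 T1 T2 u1 u2 w1 w2 x w2 := by
  rcases h with h | ⟨h1, h2, h3⟩ | ⟨h1, h2, h3⟩
  · exact Or.inr ⟨h, .refl⟩
  · exact Or.inl ⟨h1, h2⟩
  · exact Or.inr ⟨h1, .refl⟩

theorem P12.uncross1 {x : V1} (h : P12 G1 G2 T1 T2 u1 u2 w1 w2 x w1) :
    P11 G1 G2 T1 T2 u1 u2 w1 w2 x u1 := by
  rcases h with ⟨h1, h2⟩ | ⟨h1, h2⟩
  · exact Or.inl h1
  · exact Or.inr (Or.inr ⟨h1, h2, .refl⟩)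

theorem P12.uncross2 {x : V1} (h : P12 G1 G2 T1 T2 u1 u2 w1 w2 x w2) :
    P11 G1 G2 T1 T2 u1 u2 w1 w2 x u2 := by
  rcases h with ⟨h1, h2⟩ | ⟨h1, h2⟩
  · exact Or.inr (Or.inl ⟨h1, h2, .refl⟩)
  · exact Or.inl h1

end P

/-- the combined crossing relation on the glued vertex set -/
def CR {E1 E2 V : Type*} (S1 S2 : Finset V) (G1 : Multigraph E1 ↥S1) (G2 : Multigraph E2 ↥S2)
    (T1 : Finset E1) (T2 : Finset E2) (u1 u2 : ↥S1) (w1 w2 : ↥S2) (a b : V) : Prop :=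
  (∀ (ha : a ∈ S1) (hb : b ∈ S1), P11 G1 G2 T1 T2 u1 u2 w1 w2 ⟨a, ha⟩ ⟨b, hb⟩) ∧
  (∀ (ha : a ∈ S1) (hb : b ∈ S2), P12 G1 G2 T1 T2 u1 u2 w1 w2 ⟨a, ha⟩ ⟨b, hb⟩) ∧
  (∀ (ha : a ∈ S2) (hb : b ∈ S1), P12 G2 G1 T2 T1 w1 w2 u1 u2 ⟨a, ha⟩ ⟨b, hb⟩) ∧
  (∀ (ha : a ∈ S2) (hb : b ∈ S2), P11 G2 G1 T2 T1 w1 w2 u1 u2 ⟨a, ha⟩ ⟨b, hb⟩)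



variable {E1 E2 V : Type*}

theorem mem_both [DecidableEq V] {S1 S2 : Finset V} {v1 v2 a : V} (hinter : S1 ∩ S2 = {v1, v2})
    (ha : a ∈ S1) (hb : a ∈ S2) : a = v1 ∨ a = v2 := by
  have : a ∈ S1 ∩ S2 := Finset.mem_inter.2 ⟨ha, hb⟩
  rw [hinter] at this
  simpa using this

theorem reach_proj [DecidableEq V]
    (S1 S2 : Finset V) (v1 v2 : V)
    (hinter : S1 ∩ S2 = {v1, v2})
    (h11 : v1 ∈ S1) (h12 : v1 ∈ S2) (h21 : v2 ∈ S1) (h22 : v2 ∈ S2)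
    (G1 : Multigraph E1 ↥S1) (G2 : Multigraph E2 ↥S2) (G : Multigraph (E1 ⊕ E2) V)
    (hsrc1 : ∀ e, G.src (Sum.inl e) = ↑(G1.src e))
    (htgt1 : ∀ e, G.tgt (Sum.inl e) = ↑(G1.tgt e))
    (hsrc2 : ∀ e, G.src (Sum.inr e) = ↑(G2.src e))
    (htgt2 : ∀ e, G.tgt (Sum.inr e) = ↑(G2.tgt e))
    (T1 : Finset E1) (T2 : Finset E2) {a b : V}
    (h : G.Reach (T1.disjSum T2) a b) :
    CR S1 S2 G1 G2 T1 T2 ⟨v1, h11⟩ ⟨v2, h21⟩ ⟨v1, h12⟩ ⟨v2, h22⟩ a b := by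
  induction h with
  | refl =>
    refine ⟨fun ha hb => P11.refl _, fun ha hb => ?_, fun ha hb => ?_, fun ha hb => P11.refl _⟩
    · rcases mem_both hinter ha hb with rfl | rfl
      · exact Or.inl ⟨.refl, .refl⟩
      · exact Or.inr ⟨.refl, .refl⟩
    · rcases mem_both hinter hb ha with rfl | rfl
      · exact Or.inl ⟨.refl, .refl⟩
      · exact Or.inr ⟨.refl, .refl⟩
  | @tail b c hab hadj ih =>
    obtain ⟨q11, q12, q21, q22⟩ := ih
    obtain ⟨f, hfT, hor⟩ := hadj
    cases f with
    | inl e =>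
      have he : e ∈ T1 := Finset.inl_mem_disjSum.1 hfT
      have hkey : ∃ (x0 y0 : ↥S1), b = ↑x0 ∧ c = ↑y0 ∧ G1.Reach T1 x0 y0 := by
        rcases hor with ⟨hs, ht⟩ | ⟨hs, ht⟩
        · exact ⟨G1.src e, G1.tgt e, by rw [← hs, hsrc1], by rw [← ht, htgt1],
            Relation.ReflTransGen.single ⟨e, he, Or.inl ⟨rfl, rfl⟩⟩⟩
        · exact ⟨G1.tgt e, G1.src e, by rw [← ht, htgt1], by rw [← hs, hsrc1],
            Relation.ReflTransGen.single ⟨e, he, Or.inr ⟨rfl, rfl⟩⟩⟩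
      obtain ⟨x0, y0, rfl, rfl, hr01⟩ := hkey
      refine ⟨fun ha hc => ?_, fun ha hc => ?_, fun ha hc => ?_, fun ha hc => ?_⟩
      · exact (q11 ha x0.2).tail hr01
      · rcases mem_both hinter y0.2 hc with heq | heq
        · have hy : y0 = ⟨v1, h11⟩ := Subtype.ext heq
          have hgoal : (⟨↑y0, hc⟩ : ↥S2) = ⟨v1, h12⟩ := Subtype.ext heq
          rw [hy] at hr01
          rw [hgoal]
          exact ((q11 ha x0.2).tail hr01).cross1
        · have hy : y0 = ⟨v2, h21⟩ := Subtype.ext heq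
          have hgoal : (⟨↑y0, hc⟩ : ↥S2) = ⟨v2, h22⟩ := Subtype.ext heq
          rw [hy] at hr01
          rw [hgoal]
          exact ((q11 ha x0.2).tail hr01).cross2
      · exact (q21 ha x0.2).tail hr01
      · rcases mem_both hinter y0.2 hc with heq | heq
        · have hy : y0 = ⟨v1, h11⟩ := Subtype.ext heq
          have hgoal : (⟨↑y0, hc⟩ : ↥S2) = ⟨v1, h12⟩ := Subtype.ext heq
          rw [hy] at hr01
          rw [hgoal]
          exact ((q21 ha x0.2).tail hr01).uncross1
        · have hy : y0 = ⟨v2, h21⟩ := Subtype.ext heq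
          have hgoal : (⟨↑y0, hc⟩ : ↥S2) = ⟨v2, h22⟩ := Subtype.ext heq
          rw [hy] at hr01
          rw [hgoal]
          exact ((q21 ha x0.2).tail hr01).uncross2
    | inr e =>
      have he : e ∈ T2 := Finset.inr_mem_disjSum.1 hfT
      have hkey : ∃ (x0 y0 : ↥S2), b = ↑x0 ∧ c = ↑y0 ∧ G2.Reach T2 x0 y0 := by
        rcases hor with ⟨hs, ht⟩ | ⟨hs, ht⟩
        · exact ⟨G2.src e, G2.tgt e, by rw [← hs, hsrc2], by rw [← ht, htgt2],
            Relation.ReflTransGen.single ⟨e, he, Or.inl ⟨rfl, rfl⟩⟩⟩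
        · exact ⟨G2.tgt e, G2.src e, by rw [← ht, htgt2], by rw [← hs, hsrc2],
            Relation.ReflTransGen.single ⟨e, he, Or.inr ⟨rfl, rfl⟩⟩⟩
      obtain ⟨x0, y0, rfl, rfl, hr02⟩ := hkey
      refine ⟨fun ha hc => ?_, fun ha hc => ?_, fun ha hc => ?_, fun ha hc => ?_⟩
      · rcases mem_both hinter hc y0.2 with heq | heq
        · have hy : y0 = ⟨v1, h12⟩ := Subtype.ext heq
          have hgoal : (⟨↑y0, hc⟩ : ↥S1) = ⟨v1, h11⟩ := Subtype.ext heq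
          rw [hy] at hr02
          rw [hgoal]
          exact ((q12 ha x0.2).tail hr02).uncross1
        · have hy : y0 = ⟨v2, h22⟩ := Subtype.ext heq
          have hgoal : (⟨↑y0, hc⟩ : ↥S1) = ⟨v2, h21⟩ := Subtype.ext heq
          rw [hy] at hr02
          rw [hgoal]
          exact ((q12 ha x0.2).tail hr02).uncross2
      · exact (q12 ha x0.2).tail hr02
      · rcases mem_both hinter hc y0.2 with heq | heq
        · have hy : y0 = ⟨v1, h12⟩ := Subtype.ext heq
          have hgoal : (⟨↑y0, hc⟩ : ↥S1) = ⟨v1, h11⟩ := Subtype.ext heq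
          rw [hy] at hr02
          rw [hgoal]
          exact ((q22 ha x0.2).tail hr02).cross1
        · have hy : y0 = ⟨v2, h22⟩ := Subtype.ext heq
          have hgoal : (⟨↑y0, hc⟩ : ↥S1) = ⟨v2, h21⟩ := Subtype.ext heq
          rw [hy] at hr02
          rw [hgoal]
          exact ((q22 ha x0.2).tail hr02).cross2
      · exact (q22 ha x0.2).tail hr02



theorem key_iff {E1 E2 V : Type*} [Fintype E1] [DecidableEq E1]
    [Fintype E2] [DecidableEq E2] [Fintype V] [DecidableEq V]
    (S1 S2 : Finset V) (v1 v2 : V) (hv : v1 ≠ v2)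
    (hcover : S1 ∪ S2 = Finset.univ) (hinter : S1 ∩ S2 = {v1, v2})
    (h11 : v1 ∈ S1) (h12 : v1 ∈ S2) (h21 : v2 ∈ S1) (h22 : v2 ∈ S2)
    (G1 : Multigraph E1 ↥S1) (G2 : Multigraph E2 ↥S2) (G : Multigraph (E1 ⊕ E2) V)
    (hsrc1 : ∀ e, G.src (Sum.inl e) = ↑(G1.src e))
    (htgt1 : ∀ e, G.tgt (Sum.inl e) = ↑(G1.tgt e))
    (hsrc2 : ∀ e, G.src (Sum.inr e) = ↑(G2.src e))
    (htgt2 : ∀ e, G.tgt (Sum.inr e) = ↑(G2.tgt e))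
    (T1 : Finset E1) (T2 : Finset E2) :
    G.IsSpanningTree (T1.disjSum T2) ↔
      (G1.IsSpanningForest {({⟨v1, h11⟩} : Finset ↥S1), ({⟨v2, h21⟩} : Finset ↥S1)} T1 ∧
        G2.IsSpanningTree T2) ∨
      (G1.IsSpanningTree T1 ∧
        G2.IsSpanningForest {({⟨v1, h12⟩} : Finset ↥S2), ({⟨v2, h22⟩} : Finset ↥S2)} T2) := by
  have hu12 : (⟨v1, h11⟩ : ↥S1) ≠ ⟨v2, h21⟩ := fun h => hv (congrArg Subtype.val h)
  have hw12 : (⟨v1, h12⟩ : ↥S2) ≠ ⟨v2, h22⟩ := fun h => hv (congrArg Subtype.val h)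
  have hpc1 : ({({⟨v1, h11⟩} : Finset ↥S1), ({⟨v2, h21⟩} : Finset ↥S1)} :
      Finset (Finset ↥S1)).card = 2 :=
    Finset.card_pair (fun h => hu12 (Finset.singleton_injective h))
  have hpc2 : ({({⟨v1, h12⟩} : Finset ↥S2), ({⟨v2, h22⟩} : Finset ↥S2)} :
      Finset (Finset ↥S2)).card = 2 :=
    Finset.card_pair (fun h => hw12 (Finset.singleton_injective h))
  have hc1 : Fintype.card ↥S1 = S1.card := Fintype.card_coe S1
  have hc2 : Fintype.card ↥S2 = S2.card := Fintype.card_coe S2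
  have hcards : S1.card + S2.card = Fintype.card V + 2 := by
    have h1 := Finset.card_union_add_card_inter S1 S2
    rw [hcover, hinter, Finset.card_univ, Finset.card_pair hv] at h1
    omega
  have lift1 : ∀ {x y : ↥S1}, G1.Reach T1 x y → G.Reach (T1.disjSum T2) ↑x ↑y := by
    intro x y h
    refine Relation.ReflTransGen.lift (fun z : ↥S1 => (z : V)) ?_ x y h
    rintro p q ⟨e, he, ⟨hs, ht⟩ | ⟨hs, ht⟩⟩
    · exact ⟨Sum.inl e, Finset.inl_mem_disjSum.2 he,
        Or.inl ⟨by rw [hsrc1, hs], by rw [htgt1, ht]⟩⟩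
    · exact ⟨Sum.inl e, Finset.inl_mem_disjSum.2 he,
        Or.inr ⟨by rw [hsrc1, hs], by rw [htgt1, ht]⟩⟩
  have lift2 : ∀ {x y : ↥S2}, G2.Reach T2 x y → G.Reach (T1.disjSum T2) ↑x ↑y := by
    intro x y h
    refine Relation.ReflTransGen.lift (fun z : ↥S2 => (z : V)) ?_ x y h
    rintro p q ⟨e, he, ⟨hs, ht⟩ | ⟨hs, ht⟩⟩
    · exact ⟨Sum.inr e, Finset.inr_mem_disjSum.2 he,
        Or.inl ⟨by rw [hsrc2, hs], by rw [htgt2, ht]⟩⟩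
    · exact ⟨Sum.inr e, Finset.inr_mem_disjSum.2 he,
        Or.inr ⟨by rw [hsrc2, hs], by rw [htgt2, ht]⟩⟩
  constructor
  · rintro ⟨hreach, hcard⟩
    rw [Finset.card_disjSum] at hcard
    have proj : ∀ a b : V, G.Reach (T1.disjSum T2) a b →
        CR S1 S2 G1 G2 T1 T2 ⟨v1, h11⟩ ⟨v2, h21⟩ ⟨v1, h12⟩ ⟨v2, h22⟩ a b :=
      fun a b h =>
        reach_proj S1 S2 v1 v2 hinter h11 h12 h21 h22 G1 G2 G hsrc1 htgt1 hsrc2 htgt2 T1 T2 h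
    have hanch1 : ∀ x : ↥S1, G1.Reach T1 x ⟨v1, h11⟩ ∨ G1.Reach T1 x ⟨v2, h21⟩ := by
      intro x
      obtain ⟨q11, -, -, -⟩ := proj ↑x v1 (hreach ↑x v1)
      rcases q11 x.2 h11 with h | ⟨h1, -, -⟩ | ⟨h1, -, -⟩
      · exact Or.inl h
      · exact Or.inl h1
      · exact Or.inr h1
    have hanch2 : ∀ x : ↥S2, G2.Reach T2 x ⟨v1, h12⟩ ∨ G2.Reach T2 x ⟨v2, h22⟩ := by
      intro x
      obtain ⟨-, -, q21, -⟩ := proj ↑x v1 (hreach ↑x v1)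
      rcases q21 x.2 h11 with ⟨h1, -⟩ | ⟨h1, -⟩
      · exact Or.inl h1
      · exact Or.inr h1
    have hLB1 : Fintype.card ↥S1 ≤ T1.card + 2 := by
      have h := G1.card_le_of_reach_anchors T1 {⟨v1, h11⟩, ⟨v2, h21⟩} (fun x => by
        rcases hanch1 x with h | h
        · exact ⟨_, Finset.mem_insert_self _ _, h⟩
        · exact ⟨_, Finset.mem_insert_of_mem (Finset.mem_singleton_self _), h⟩)
      rwa [Finset.card_pair hu12] at h
    have hLB2 : Fintype.card ↥S2 ≤ T2.card + 2 := by
      have h := G2.card_le_of_reach_anchors T2 {⟨v1, h12⟩, ⟨v2, h22⟩} (fun x => by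
        rcases hanch2 x with h | h
        · exact ⟨_, Finset.mem_insert_self _ _, h⟩
        · exact ⟨_, Finset.mem_insert_of_mem (Finset.mem_singleton_self _), h⟩)
      rwa [Finset.card_pair hw12] at h
    have hor : G1.Reach T1 ⟨v1, h11⟩ ⟨v2, h21⟩ ∨ G2.Reach T2 ⟨v1, h12⟩ ⟨v2, h22⟩ := by
      obtain ⟨q11, -, -, -⟩ := proj v1 v2 (hreach v1 v2)
      rcases q11 h11 h21 with h | ⟨-, h2, -⟩ | ⟨-, h2, -⟩
      · exact Or.inl h
      · exact Or.inr h2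
      · exact Or.inr (G2.reach_symm h2)
    rcases hor with hr1 | hr2
    · right
      have hconn1 : ∀ x y : ↥S1, G1.Reach T1 x y := by
        intro x y
        obtain ⟨q11, -, -, -⟩ := proj ↑x ↑y (hreach ↑x ↑y)
        rcases q11 x.2 y.2 with h | ⟨h1, -, h3⟩ | ⟨h1, -, h3⟩
        · exact h
        · exact (h1.trans hr1).trans h3
        · exact (h1.trans (G1.reach_symm hr1)).trans h3
      have hLB1' : Fintype.card ↥S1 ≤ T1.card + 1 := by
        have h := G1.card_le_of_reach_anchors T1 {⟨v1, h11⟩}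
          (fun x => ⟨_, Finset.mem_singleton_self _, hconn1 x _⟩)
        rwa [Finset.card_singleton] at h
      have hnr2 : ¬ G2.Reach T2 ⟨v1, h12⟩ ⟨v2, h22⟩ := by
        intro hr2
        have hconn2 : ∀ x y : ↥S2, G2.Reach T2 x y := by
          intro x y
          obtain ⟨-, -, -, q22⟩ := proj ↑x ↑y (hreach ↑x ↑y)
          rcases q22 x.2 y.2 with h | ⟨h1, -, h3⟩ | ⟨h1, -, h3⟩
          · exact h
          · exact (h1.trans hr2).trans h3
          · exact (h1.trans (G2.reach_symm hr2)).trans h3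
        have hLB2' : Fintype.card ↥S2 ≤ T2.card + 1 := by
          have h := G2.card_le_of_reach_anchors T2 {⟨v1, h12⟩}
            (fun x => ⟨_, Finset.mem_singleton_self _, hconn2 x _⟩)
          rwa [Finset.card_singleton] at h
        omega
      refine ⟨⟨hconn1, by omega⟩, ?_, ?_, ?_, ?_⟩
      · rw [hpc2]; omega
      · rintro p hp x hx y hy
        rcases Finset.mem_insert.1 hp with rfl | hp
        · rw [Finset.mem_singleton] at hx hy; subst hx; subst hy; exact .refl
        · rw [Finset.mem_singleton] at hp; subst hp
          rw [Finset.mem_singleton] at hx hy; subst hx; subst hy; exact .refl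
      · rintro p hp q hq hpq x hx y hy hre
        simp only [Finset.mem_insert, Finset.mem_singleton] at hp hq
        rcases hp with rfl | rfl <;> rcases hq with rfl | rfl <;>
          simp only [Finset.mem_singleton] at hx hy <;> subst hx <;> subst hy
        · exact hpq rfl
        · exact hnr2 hre
        · exact hnr2 (G2.reach_symm hre)
        · exact hpq rfl
      · intro x
        rcases hanch2 x with h | h
        · exact ⟨_, Finset.mem_insert_self _ _, _, Finset.mem_singleton_self _, h⟩
        · exact ⟨_, Finset.mem_insert_of_mem (Finset.mem_singleton_self _), _,
            Finset.mem_singleton_self _, h⟩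
    · left
      have hconn2 : ∀ x y : ↥S2, G2.Reach T2 x y := by
        intro x y
        obtain ⟨-, -, -, q22⟩ := proj ↑x ↑y (hreach ↑x ↑y)
        rcases q22 x.2 y.2 with h | ⟨h1, -, h3⟩ | ⟨h1, -, h3⟩
        · exact h
        · exact (h1.trans hr2).trans h3
        · exact (h1.trans (G2.reach_symm hr2)).trans h3
      have hLB2' : Fintype.card ↥S2 ≤ T2.card + 1 := by
        have h := G2.card_le_of_reach_anchors T2 {⟨v1, h12⟩}
          (fun x => ⟨_, Finset.mem_singleton_self _, hconn2 x _⟩)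
        rwa [Finset.card_singleton] at h
      have hnr1 : ¬ G1.Reach T1 ⟨v1, h11⟩ ⟨v2, h21⟩ := by
        intro hr1
        have hconn1 : ∀ x y : ↥S1, G1.Reach T1 x y := by
          intro x y
          obtain ⟨q11, -, -, -⟩ := proj ↑x ↑y (hreach ↑x ↑y)
          rcases q11 x.2 y.2 with h | ⟨h1, -, h3⟩ | ⟨h1, -, h3⟩
          · exact h
          · exact (h1.trans hr1).trans h3
          · exact (h1.trans (G1.reach_symm hr1)).trans h3
        have hLB1' : Fintype.card ↥S1 ≤ T1.card + 1 := by
          have h := G1.card_le_of_reach_anchors T1 {⟨v1, h11⟩}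
            (fun x => ⟨_, Finset.mem_singleton_self _, hconn1 x _⟩)
          rwa [Finset.card_singleton] at h
        omega
      refine ⟨⟨?_, ?_, ?_, ?_⟩, hconn2, by omega⟩
      · rw [hpc1]; omega
      · rintro p hp x hx y hy
        rcases Finset.mem_insert.1 hp with rfl | hp
        · rw [Finset.mem_singleton] at hx hy; subst hx; subst hy; exact .refl
        · rw [Finset.mem_singleton] at hp; subst hp
          rw [Finset.mem_singleton] at hx hy; subst hx; subst hy; exact .refl
      · rintro p hp q hq hpq x hx y hy hre
        simp only [Finset.mem_insert, Finset.mem_singleton] at hp hq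
        rcases hp with rfl | rfl <;> rcases hq with rfl | rfl <;>
          simp only [Finset.mem_singleton] at hx hy <;> subst hx <;> subst hy
        · exact hpq rfl
        · exact hnr1 hre
        · exact hnr1 (G1.reach_symm hre)
        · exact hpq rfl
      · intro x
        rcases hanch1 x with h | h
        · exact ⟨_, Finset.mem_insert_self _ _, _, Finset.mem_singleton_self _, h⟩
        · exact ⟨_, Finset.mem_insert_of_mem (Finset.mem_singleton_self _), _,
            Finset.mem_singleton_self _, h⟩
  · rintro (⟨hf1, ht2⟩ | ⟨ht1, hf2⟩)
    · have hcard1 : T1.card + 2 = Fintype.card ↥S1 := by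
        have h := hf1.1; rwa [hpc1] at h
      have hcard2 := ht2.2
      constructor
      · have toV1 : ∀ a : V, G.Reach (T1.disjSum T2) a v1 := by
          intro a
          have haU : a ∈ S1 ∪ S2 := by rw [hcover]; exact Finset.mem_univ a
          rcases Finset.mem_union.1 haU with ha | ha
          · obtain ⟨-, -, -, hcov⟩ := hf1
            obtain ⟨p, hp, x, hx, hrx⟩ := hcov ⟨a, ha⟩
            rcases Finset.mem_insert.1 hp with rfl | hp
            · rw [Finset.mem_singleton] at hx; subst hx
              exact lift1 hrx
            · rw [Finset.mem_singleton] at hp; subst hp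
              rw [Finset.mem_singleton] at hx; subst hx
              exact (lift1 hrx).trans (lift2 (ht2.1 ⟨v2, h22⟩ ⟨v1, h12⟩))
          · exact lift2 (ht2.1 ⟨a, ha⟩ ⟨v1, h12⟩)
        intro x y
        exact (toV1 x).trans (G.reach_symm (toV1 y))
      · rw [Finset.card_disjSum]; omega
    · have hcard2 : T2.card + 2 = Fintype.card ↥S2 := by
        have h := hf2.1; rwa [hpc2] at h
      have hcard1 := ht1.2
      constructor
      · have toV1 : ∀ a : V, G.Reach (T1.disjSum T2) a v1 := by
          intro a
          have haU : a ∈ S1 ∪ S2 := by rw [hcover]; exact Finset.mem_univ a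
          rcases Finset.mem_union.1 haU with ha | ha
          · exact lift1 (ht1.1 ⟨a, ha⟩ ⟨v1, h11⟩)
          · obtain ⟨-, -, -, hcov⟩ := hf2
            obtain ⟨p, hp, x, hx, hrx⟩ := hcov ⟨a, ha⟩
            rcases Finset.mem_insert.1 hp with rfl | hp
            · rw [Finset.mem_singleton] at hx; subst hx
              exact lift2 hrx
            · rw [Finset.mem_singleton] at hp; subst hp
              rw [Finset.mem_singleton] at hx; subst hx
              exact (lift2 hrx).trans (lift1 (ht1.1 ⟨v2, h21⟩ ⟨v1, h11⟩))
        intro x y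
        exact (toV1 x).trans (G.reach_symm (toV1 y))
      · rw [Finset.card_disjSum]; omega

end TVJ


open MvPolynomial in
/-- **two-vertex join factorization.**  Let `G` be glued from `G₁` (on the
vertex set `S₁`, with edges `E₁`) and `G₂` (on `S₂`, with edges `E₂`) along
`S₁ ∩ S₂ = {v₁, v₂}`.  Then
`Ψ_G = Φ^{{v₁},{v₂}}_{G₁} · Ψ_{G₂} + Ψ_{G₁} · Φ^{{v₁},{v₂}}_{G₂}`. -/
theorem two_vertex_join_kirchhoff {E1 E2 V : Type*} [Fintype E1] [DecidableEq E1]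
    [Fintype E2] [DecidableEq E2] [Fintype V] [DecidableEq V]
    (S1 S2 : Finset V) (v1 v2 : V) (hv : v1 ≠ v2)
    (hcover : S1 ∪ S2 = Finset.univ) (hinter : S1 ∩ S2 = {v1, v2})
    (h11 : v1 ∈ S1) (h12 : v1 ∈ S2) (h21 : v2 ∈ S1) (h22 : v2 ∈ S2)
    (G1 : Multigraph E1 ↥S1) (G2 : Multigraph E2 ↥S2) (G : Multigraph (E1 ⊕ E2) V)
    (hsrc1 : ∀ e, G.src (Sum.inl e) = ↑(G1.src e))
    (htgt1 : ∀ e, G.tgt (Sum.inl e) = ↑(G1.tgt e))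
    (hsrc2 : ∀ e, G.src (Sum.inr e) = ↑(G2.src e))
    (htgt2 : ∀ e, G.tgt (Sum.inr e) = ↑(G2.tgt e))
    (hconn : G.Connected) :
    G.kirchhoff
      = rename Sum.inl
          (G1.forestPoly {({⟨v1, h11⟩} : Finset ↥S1), ({⟨v2, h21⟩} : Finset ↥S1)})
        * rename Sum.inr G2.kirchhoff
      + rename Sum.inl G1.kirchhoff
        * rename Sum.inr
          (G2.forestPoly {({⟨v1, h12⟩} : Finset ↥S2), ({⟨v2, h22⟩} : Finset ↥S2)}) := by
  classical
  have hkey := fun (T1 : Finset E1) (T2 : Finset E2) =>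
    TVJ.key_iff S1 S2 v1 v2 hv hcover hinter h11 h12 h21 h22 G1 G2 G
      hsrc1 htgt1 hsrc2 htgt2 T1 T2
  have hpc1 : ({({⟨v1, h11⟩} : Finset ↥S1), ({⟨v2, h21⟩} : Finset ↥S1)} :
      Finset (Finset ↥S1)).card = 2 :=
    Finset.card_pair (fun h => hv (congrArg Subtype.val (Finset.singleton_injective h)))
  have hpc2 : ({({⟨v1, h12⟩} : Finset ↥S2), ({⟨v2, h22⟩} : Finset ↥S2)} :
      Finset (Finset ↥S2)).card = 2 :=
    Finset.card_pair (fun h => hv (congrArg Subtype.val (Finset.singleton_injective h)))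
  have hexcl : ∀ (T1 : Finset E1) (T2 : Finset E2),
      ¬ ((G1.IsSpanningForest {({⟨v1, h11⟩} : Finset ↥S1), ({⟨v2, h21⟩} : Finset ↥S1)} T1 ∧
          G2.IsSpanningTree T2) ∧
        (G1.IsSpanningTree T1 ∧
          G2.IsSpanningForest {({⟨v1, h12⟩} : Finset ↥S2), ({⟨v2, h22⟩} : Finset ↥S2)} T2)) := by
    rintro T1 T2 ⟨⟨hf1, -⟩, ⟨ht1, -⟩⟩
    have h1 := hf1.1
    have h2 := ht1.2
    rw [hpc1] at h1
    omega
  have hcompl : ∀ (s : Finset E1) (t : Finset E2), (s.disjSum t)ᶜ = sᶜ.disjSum tᶜ := by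
    intro s t; ext x; cases x <;> simp
  have hL : G.kirchhoff = ∑ p : Finset E1 × Finset E2,
      (if G.IsSpanningTree (p.1.disjSum p.2) then
        (∏ e ∈ p.1ᶜ, (X (Sum.inl e) : MvPolynomial (E1 ⊕ E2) ℚ)) *
          ∏ e ∈ p.2ᶜ, X (Sum.inr e) else 0) := by
    rw [Multigraph.kirchhoff]
    refine (Fintype.sum_equiv
      ⟨fun p : Finset E1 × Finset E2 => p.1.disjSum p.2, fun T => (T.toLeft, T.toRight),
        fun p => by simp, fun T => Finset.toLeft_disjSum_toRight⟩ _ _ fun p => ?_).symm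
    simp only [Equiv.coe_fn_mk]
    rw [hcompl, Finset.prod_disjSum]
  have hR1 : (rename Sum.inl
        (G1.forestPoly {({⟨v1, h11⟩} : Finset ↥S1), ({⟨v2, h21⟩} : Finset ↥S1)}) :
        MvPolynomial (E1 ⊕ E2) ℚ) =
      ∑ T1 : Finset E1,
        if G1.IsSpanningForest {({⟨v1, h11⟩} : Finset ↥S1), ({⟨v2, h21⟩} : Finset ↥S1)} T1
        then ∏ e ∈ T1ᶜ, (X (Sum.inl e) : MvPolynomial (E1 ⊕ E2) ℚ) else 0 := by
    rw [Multigraph.forestPoly, map_sum]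
    refine Finset.sum_congr rfl fun T1 _ => ?_
    rw [apply_ite (rename (R := ℚ) Sum.inl), map_zero, map_prod]
    simp [rename_X]
  have hR2 : (rename Sum.inr G2.kirchhoff : MvPolynomial (E1 ⊕ E2) ℚ) =
      ∑ T2 : Finset E2,
        if G2.IsSpanningTree T2
        then ∏ e ∈ T2ᶜ, (X (Sum.inr e) : MvPolynomial (E1 ⊕ E2) ℚ) else 0 := by
    rw [Multigraph.kirchhoff, map_sum]
    refine Finset.sum_congr rfl fun T2 _ => ?_
    rw [apply_ite (rename (R := ℚ) Sum.inr), map_zero, map_prod]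
    simp [rename_X]
  have hR3 : (rename Sum.inl G1.kirchhoff : MvPolynomial (E1 ⊕ E2) ℚ) =
      ∑ T1 : Finset E1,
        if G1.IsSpanningTree T1
        then ∏ e ∈ T1ᶜ, (X (Sum.inl e) : MvPolynomial (E1 ⊕ E2) ℚ) else 0 := by
    rw [Multigraph.kirchhoff, map_sum]
    refine Finset.sum_congr rfl fun T1 _ => ?_
    rw [apply_ite (rename (R := ℚ) Sum.inl), map_zero, map_prod]
    simp [rename_X]
  have hR4 : (rename Sum.inr
        (G2.forestPoly {({⟨v1, h12⟩} : Finset ↥S2), ({⟨v2, h22⟩} : Finset ↥S2)}) :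
        MvPolynomial (E1 ⊕ E2) ℚ) =
      ∑ T2 : Finset E2,
        if G2.IsSpanningForest {({⟨v1, h12⟩} : Finset ↥S2), ({⟨v2, h22⟩} : Finset ↥S2)} T2
        then ∏ e ∈ T2ᶜ, (X (Sum.inr e) : MvPolynomial (E1 ⊕ E2) ℚ) else 0 := by
    rw [Multigraph.forestPoly, map_sum]
    refine Finset.sum_congr rfl fun T2 _ => ?_
    rw [apply_ite (rename (R := ℚ) Sum.inr), map_zero, map_prod]
    simp [rename_X]
  rw [hL, hR1, hR2, hR3, hR4, Finset.sum_mul_sum, Finset.sum_mul_sum,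
    ← Finset.sum_add_distrib, Fintype.sum_prod_type]
  refine Finset.sum_congr rfl fun T1 _ => ?_
  rw [← Finset.sum_add_distrib]
  refine Finset.sum_congr rfl fun T2 _ => ?_
  rw [hkey T1 T2]
  by_cases hA : G1.IsSpanningForest
      {({⟨v1, h11⟩} : Finset ↥S1), ({⟨v2, h21⟩} : Finset ↥S1)} T1 ∧ G2.IsSpanningTree T2 <;>
    by_cases hB : G1.IsSpanningTree T1 ∧
      G2.IsSpanningForest {({⟨v1, h12⟩} : Finset ↥S2), ({⟨v2, h22⟩} : Finset ↥S2)} T2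
  · exact absurd ⟨hA, hB⟩ (hexcl T1 T2)
  · rw [if_pos (Or.inl hA), if_pos hA.1, if_pos hA.2]
    rcases not_and_or.1 hB with h | h
    · rw [if_neg h, zero_mul, add_zero]
    · rw [if_neg h, mul_zero, add_zero]
  · rw [if_pos (Or.inr hB), if_pos hB.1, if_pos hB.2]
    rcases not_and_or.1 hA with h | h
    · rw [if_neg h, zero_mul, zero_add]
    · rw [if_neg h, mul_zero, zero_add]
  · rw [if_neg (fun h => h.elim hA hB)]
    have z1 : (if G1.IsSpanningForest
          {({⟨v1, h11⟩} : Finset ↥S1), ({⟨v2, h21⟩} : Finset ↥S1)} T1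
        then ∏ e ∈ T1ᶜ, (X (Sum.inl e) : MvPolynomial (E1 ⊕ E2) ℚ) else 0) *
        (if G2.IsSpanningTree T2
        then ∏ e ∈ T2ᶜ, (X (Sum.inr e) : MvPolynomial (E1 ⊕ E2) ℚ) else 0) = 0 := by
      rcases not_and_or.1 hA with h | h
      · rw [if_neg h, zero_mul]
      · rw [if_neg h, mul_zero]
    have z2 : (if G1.IsSpanningTree T1
        then ∏ e ∈ T1ᶜ, (X (Sum.inl e) : MvPolynomial (E1 ⊕ E2) ℚ) else 0) *
        (if G2.IsSpanningForest
          {({⟨v1, h12⟩} : Finset ↥S2), ({⟨v2, h22⟩} : Finset ↥S2)} T2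
        then ∏ e ∈ T2ᶜ, (X (Sum.inr e) : MvPolynomial (E1 ⊕ E2) ℚ) else 0) = 0 := by
      rcases not_and_or.1 hB with h | h
      · rw [if_neg h, zero_mul]
      · rw [if_neg h, mul_zero]
    rw [z1, z2, add_zero]
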